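/- Let R be a commutative ring, m ≥ 1, x₁, …, xₘ, y ∈ R, and c : {1,…,m} → ℕ. Then (∏_{i=1}^m (1 + y·xᵢ)) · det[(xᵢ^{c_j})_{1≤i,j≤m}] = Σ_{ε ∈ {0,1}^m} y^{ε₁+…+εₘ} · det[(xᵢ^{c_j + ε_j})_{1≤i,j≤m}]. -/

import Mathlib

/-- for a commutative ring `R`, `m ≥ 1`, `x₁,…,xₘ, y ∈ R` and an
exponent tuple `c : {1,…,m} → ℕ`,
`(∏ᵢ (1 + y·xᵢ)) · det[(xᵢ^{c_j})] = Σ_{ε ∈ {0,1}^m} y^{Σε} · det[(xᵢ^{c_j + ε_j})]`. -/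
theorem statement14 (R : Type*) [CommRing R] (m : ℕ) (hm : 1 ≤ m)
    (x : Fin m → R) (y : R) (c : Fin m → ℕ) :
    (∏ i, (1 + y * x i)) * (Matrix.of fun i j : Fin m => x i ^ c j).det
      = ∑ ε : Fin m → Fin 2, y ^ (∑ j, (ε j : ℕ)) *
          (Matrix.of fun i j : Fin m => x i ^ (c j + (ε j : ℕ))).det := by
  have h1 : (∏ i, (1 + y * x i)) * (Matrix.of fun i j : Fin m => x i ^ c j).det
      = (Matrix.of fun j i : Fin m => (1 + y * x i) * x i ^ c j).det := by
    rw [← (Matrix.of fun i j : Fin m => x i ^ c j).det_transpose, ← Matrix.det_mul_row]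
    rfl
  rw [h1]
  have hms := MultilinearMap.map_sum
      (Matrix.detRowAlternating (R := R) (n := Fin m)).toMultilinearMap
      (fun j (e : Fin 2) => fun i : Fin m => y ^ (e : ℕ) * x i ^ (c j + (e : ℕ)))
  have h2 : (Matrix.of fun j i : Fin m => (1 + y * x i) * x i ^ c j).det
      = ∑ r : Fin m → Fin 2,
          (Matrix.detRowAlternating (R := R) (n := Fin m)).toMultilinearMap
            (fun j => fun i : Fin m => y ^ (r j : ℕ) * x i ^ (c j + (r j : ℕ))) := by
    rw [← hms]
    show Matrix.det _ = Matrix.det (Matrix.of fun j => _)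
    congr 1
    ext j i
    show (1 + y * x i) * x i ^ c j
        = (∑ e : Fin 2, fun i : Fin m => y ^ (e : ℕ) * x i ^ (c j + (e : ℕ))) i
    rw [Finset.sum_apply, Fin.sum_univ_two]
    simp only [Fin.val_zero, Fin.val_one, pow_zero, pow_one, one_mul, add_zero]
    ring
  rw [h2]
  refine Finset.sum_congr rfl fun ε _ => ?_
  have h3 : ((Matrix.detRowAlternating (R := R) (n := Fin m)).toMultilinearMap
        fun j => (fun i => y ^ (ε j : ℕ) * x i ^ (c j + (ε j : ℕ))))
      = (Matrix.of fun j i : Fin m => y ^ (ε j : ℕ) * x i ^ (c j + (ε j : ℕ))).det := rfl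
  rw [h3]
  refine (Matrix.det_mul_column (fun j => y ^ (ε j : ℕ))
    (Matrix.of fun j i : Fin m => x i ^ (c j + (ε j : ℕ)))).trans ?_
  rw [Finset.prod_pow_eq_pow_sum]
  congr 1
  rw [← Matrix.det_transpose]
  rfl
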